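/- Suppose A₀, ΔA : [0,∞) → ℝ^{n×n}, B₀, ΔB : [0,∞) → ℝⁿ, K symmetric, P : [0,∞) → ℝ^{n×n} C¹ with P(t) ≤ p̄ I, and Ṗ + P H₀ + H₀ᵀ P ≤ -q₀ P where H₀ = A₀ - B₀B₀ᵀK, with pI ≤ P(t). If 2p̄ |ΔA(t) - (B₀(t)ΔB(t)ᵀ + ΔB(t)B₀(t)ᵀ + ΔB(t)ΔB(t)ᵀ)K| ≤ (q₀ p)/2 for all t ≥ 0, then Ṗ + P H + Hᵀ P ≤ -(q₀/2) P, where H = (A₀+ΔA) - (B₀+ΔB)(B₀+ΔB)ᵀK. -/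

import Mathlib

open Matrix
open scoped Matrix.Norms.L2Operator RealInnerProductSpace

private lemma herm_of_trans {n : ℕ} {A : Matrix (Fin n) (Fin n) ℝ} (h : Aᵀ = A) :
    A.IsHermitian := by
  show Aᴴ = A
  rw [Matrix.conjTranspose_eq_transpose_of_trivial]
  exact h

private lemma trans_of_herm {n : ℕ} {A : Matrix (Fin n) (Fin n) ℝ} (h : A.IsHermitian) :
    Aᵀ = A := by
  rw [← Matrix.conjTranspose_eq_transpose_of_trivial]
  exact h

private lemma psd_smul_one {n : ℕ} {p : ℝ} (hp : 0 ≤ p) :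
    (p • (1 : Matrix (Fin n) (Fin n) ℝ)).PosSemidef := by
  refine Matrix.PosSemidef.of_dotProduct_mulVec_nonneg (herm_of_trans (by rw [Matrix.transpose_smul, Matrix.transpose_one])) (fun x => ?_)
  simp only [Matrix.smul_mulVec, Matrix.one_mulVec, dotProduct_smul,
    smul_eq_mul, star_trivial]
  exact mul_nonneg hp (by simpa using dotProduct_star_self_nonneg x)

open scoped MatrixOrder in
private lemma aux_psd_sq {n : ℕ} {Q : Matrix (Fin n) (Fin n) ℝ} (hQ : Q.PosSemidef) {pbar : ℝ}
    (hQu : (pbar • (1 : Matrix (Fin n) (Fin n) ℝ) - Q).PosSemidef) :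
    (pbar • Q - Q * Q).PosSemidef := by
  obtain ⟨S, hS1, hS2⟩ : ∃ S : Matrix (Fin n) (Fin n) ℝ, S.PosSemidef ∧ S * S = Q :=
    ⟨CFC.sqrt Q, (CFC.sqrt_nonneg Q).posSemidef, CFC.sqrt_mul_sqrt_self Q hQ.nonneg⟩
  have key := hQu.mul_mul_conjTranspose_same S
  have e : S * (pbar • (1 : Matrix (Fin n) (Fin n) ℝ) - Q) * Sᴴ = pbar • Q - Q * Q := by
    rw [hS1.1, ← hS2]
    noncomm_ring [Matrix.smul_mul, Matrix.mul_smul]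
  rwa [e] at key

private lemma aux_key {n : ℕ} (Q M : Matrix (Fin n) (Fin n) ℝ) (p pbar c : ℝ) (hp : 0 < p)
    (hc : 0 < c)
    (hQl : (Q - p • (1 : Matrix (Fin n) (Fin n) ℝ)).PosSemidef)
    (hQu : (pbar • (1 : Matrix (Fin n) (Fin n) ℝ) - Q).PosSemidef)
    (hM : 2 * pbar * ‖M‖ ≤ c * p / 2) (x : Fin n → ℝ) :
    x ⬝ᵥ (Q * M + Mᵀ * Q) *ᵥ x ≤ (c / 2) * (x ⬝ᵥ Q *ᵥ x) := by
  have hQ : Q.PosSemidef := by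
    have := hQl.add (psd_smul_one hp.le)
    simpa using this
  have hsym : Qᵀ = Q := trans_of_herm hQ.1
  -- rewrite the quadratic form
  have e1 : x ⬝ᵥ (Q * M) *ᵥ x = (Q *ᵥ x) ⬝ᵥ (M *ᵥ x) := by
    rw [← Matrix.mulVec_mulVec, Matrix.dotProduct_mulVec, ← Matrix.mulVec_transpose, hsym]
  have e2 : x ⬝ᵥ (Mᵀ * Q) *ᵥ x = (M *ᵥ x) ⬝ᵥ (Q *ᵥ x) := by
    rw [← Matrix.mulVec_mulVec, Matrix.dotProduct_mulVec, ← Matrix.mulVec_transpose,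
      Matrix.transpose_transpose]
  have e3 : x ⬝ᵥ (Q * M + Mᵀ * Q) *ᵥ x
      = 2 * ((Q *ᵥ x) ⬝ᵥ (M *ᵥ x)) := by
    rw [Matrix.add_mulVec, dotProduct_add, e1, e2, dotProduct_comm]
    ring
  rw [e3]
  by_cases hx : x = 0
  · simp [hx]
  -- Euclidean space setup
  set ee : (Fin n → ℝ) → EuclideanSpace ℝ (Fin n) := fun a => (WithLp.equiv 2 (Fin n → ℝ)).symm a with hee
  have hinner : ∀ a b : Fin n → ℝ, a ⬝ᵥ b = (inner ℝ (ee a) (ee b) : ℝ) := by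
    intro a b
    rw [hee, WithLp.equiv_symm_apply, EuclideanSpace.inner_toLp_toLp]
    simp [dotProduct_comm]
  have hnormsq : ∀ a : Fin n → ℝ, a ⬝ᵥ a = ‖ee a‖ ^ 2 := by
    intro a
    rw [hinner, real_inner_self_eq_norm_sq]
  have hxx : (0:ℝ) < ‖ee x‖ ^ 2 := by
    have : ee x ≠ 0 := by
      simp only [hee, ne_eq, WithLp.equiv_symm_apply, WithLp.toLp_eq_zero]
      exact hx
    exact pow_pos (norm_pos_iff.mpr this) 2
  -- p ‖x‖² ≤ xᵀQx ≤ pbar ‖x‖²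
  have hlow : p * ‖ee x‖ ^ 2 ≤ x ⬝ᵥ Q *ᵥ x := by
    have h := hQl.dotProduct_mulVec_nonneg x
    simp only [star_trivial, Matrix.sub_mulVec, Matrix.smul_mulVec, Matrix.one_mulVec,
      dotProduct_sub, dotProduct_smul, smul_eq_mul] at h
    rw [hnormsq x] at h
    linarith
  have hupp : x ⬝ᵥ Q *ᵥ x ≤ pbar * ‖ee x‖ ^ 2 := by
    have h := hQu.dotProduct_mulVec_nonneg x
    simp only [star_trivial, Matrix.sub_mulVec, Matrix.smul_mulVec, Matrix.one_mulVec,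
      dotProduct_sub, dotProduct_smul, smul_eq_mul] at h
    rw [hnormsq x] at h
    linarith
  have hpbar : 0 < pbar := by nlinarith
  -- ‖Qx‖ ≤ pbar ‖x‖
  have hQxsq : (Q *ᵥ x) ⬝ᵥ (Q *ᵥ x) ≤ pbar * (x ⬝ᵥ Q *ᵥ x) := by
    have h := (aux_psd_sq hQ hQu).dotProduct_mulVec_nonneg x
    simp only [star_trivial, Matrix.sub_mulVec, Matrix.smul_mulVec,
      dotProduct_sub, dotProduct_smul, smul_eq_mul] at h
    have e4 : x ⬝ᵥ (Q * Q) *ᵥ x = (Q *ᵥ x) ⬝ᵥ (Q *ᵥ x) := by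
      rw [← Matrix.mulVec_mulVec, Matrix.dotProduct_mulVec, ← Matrix.mulVec_transpose, hsym]
    rw [e4] at h
    linarith
  have hQxnorm : ‖ee (Q *ᵥ x)‖ ≤ pbar * ‖ee x‖ := by
    have h1 : ‖ee (Q *ᵥ x)‖ ^ 2 ≤ (pbar * ‖ee x‖) ^ 2 := by
      rw [← hnormsq]
      calc (Q *ᵥ x) ⬝ᵥ (Q *ᵥ x) ≤ pbar * (x ⬝ᵥ Q *ᵥ x) := hQxsq
        _ ≤ pbar * (pbar * ‖ee x‖ ^ 2) := by
            exact mul_le_mul_of_nonneg_left hupp hpbar.le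
        _ = (pbar * ‖ee x‖) ^ 2 := by ring
    nlinarith [norm_nonneg (ee (Q *ᵥ x)), mul_nonneg hpbar.le (norm_nonneg (ee x))]
  -- ‖Mx‖ ≤ ‖M‖ ‖x‖
  have hMx : ‖ee (M *ᵥ x)‖ ≤ ‖M‖ * ‖ee x‖ := M.l2_opNorm_mulVec (ee x)
  -- Cauchy–Schwarz
  have hCS : (Q *ᵥ x) ⬝ᵥ (M *ᵥ x) ≤ ‖ee (Q *ᵥ x)‖ * ‖ee (M *ᵥ x)‖ := by
    rw [hinner]
    exact real_inner_le_norm _ _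
  have hprod : ‖ee (Q *ᵥ x)‖ * ‖ee (M *ᵥ x)‖ ≤ (pbar * ‖ee x‖) * (‖M‖ * ‖ee x‖) :=
    mul_le_mul hQxnorm hMx (norm_nonneg _) (by positivity)
  have hfin : 2 * ((pbar * ‖ee x‖) * (‖M‖ * ‖ee x‖)) ≤ (c / 2) * (p * ‖ee x‖ ^ 2) := by
    have := mul_le_mul_of_nonneg_right hM (sq_nonneg ‖ee x‖)
    nlinarith
  have : (c / 2) * (p * ‖ee x‖ ^ 2) ≤ (c / 2) * (x ⬝ᵥ Q *ᵥ x) :=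
    mul_le_mul_of_nonneg_left hlow (by positivity)
  linarith

theorem stmt18 {n : ℕ} (A₀ ΔA : ℝ → Matrix (Fin n) (Fin n) ℝ)
    (B₀ ΔB : ℝ → Fin n → ℝ)
    (K : Matrix (Fin n) (Fin n) ℝ) (hKsymm : Kᵀ = K)
    (P P' : ℝ → Matrix (Fin n) (Fin n) ℝ) (hP : ∀ t, HasDerivAt P (P' t) t)
    (p pbar q₀ : ℝ) (hp : 0 < p) (hq₀ : 0 < q₀)
    (hPl : ∀ t ≥ (0 : ℝ), (P t - p • (1 : Matrix (Fin n) (Fin n) ℝ)).PosSemidef)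
    (hPu : ∀ t ≥ (0 : ℝ), (pbar • (1 : Matrix (Fin n) (Fin n) ℝ) - P t).PosSemidef)
    (H₀ : ℝ → Matrix (Fin n) (Fin n) ℝ)
    (hH₀ : ∀ t, H₀ t = A₀ t - vecMulVec (B₀ t) (B₀ t) * K)
    (hLyap0 : ∀ t ≥ (0 : ℝ),
      ((-q₀) • P t - (P' t + P t * H₀ t + (H₀ t)ᵀ * P t)).PosSemidef)
    (hsmall : ∀ t ≥ (0 : ℝ),
      2 * pbar * ‖ΔA t -
        (vecMulVec (B₀ t) (ΔB t) + vecMulVec (ΔB t) (B₀ t) +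
          vecMulVec (ΔB t) (ΔB t)) * K‖ ≤ q₀ * p / 2)
    (H : ℝ → Matrix (Fin n) (Fin n) ℝ)
    (hH : ∀ t, H t = (A₀ t + ΔA t) -
      vecMulVec (B₀ t + ΔB t) (B₀ t + ΔB t) * K) :
    ∀ t ≥ (0 : ℝ),
      ((-(q₀ / 2)) • P t - (P' t + P t * H t + (H t)ᵀ * P t)).PosSemidef := by
  intro t ht
  set M : Matrix (Fin n) (Fin n) ℝ :=
    ΔA t - (vecMulVec (B₀ t) (ΔB t) + vecMulVec (ΔB t) (B₀ t) +
      vecMulVec (ΔB t) (ΔB t)) * K with hMdef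
  have hvv : vecMulVec (B₀ t + ΔB t) (B₀ t + ΔB t)
      = vecMulVec (B₀ t) (B₀ t) + (vecMulVec (B₀ t) (ΔB t) + vecMulVec (ΔB t) (B₀ t) +
        vecMulVec (ΔB t) (ΔB t)) := by
    ext i j
    simp [Matrix.vecMulVec_apply, Matrix.add_apply]
    ring
  have hHdec : H t = H₀ t + M := by
    rw [hH, hH₀, hvv, hMdef]
    noncomm_ring
  -- the uncertainty quadratic-form bound
  have hQ : P t - p • (1 : Matrix (Fin n) (Fin n) ℝ) |>.PosSemidef := hPl t ht
  have hQu := hPu t ht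
  have hQpsd : (P t).PosSemidef := by
    have := hQ.add (psd_smul_one hp.le)
    simpa using this
  have hPsym : (P t)ᵀ = P t := trans_of_herm hQpsd.1
  -- decompose goal matrix
  have hGdec : (-(q₀ / 2)) • P t - (P' t + P t * H t + (H t)ᵀ * P t)
      = ((-q₀) • P t - (P' t + P t * H₀ t + (H₀ t)ᵀ * P t))
        + ((q₀ / 2) • P t - (P t * M + Mᵀ * P t)) := by
    rw [hHdec, Matrix.transpose_add, Matrix.mul_add, Matrix.add_mul]
    module
  rw [hGdec]
  refine (hLyap0 t ht).add (Matrix.PosSemidef.of_dotProduct_mulVec_nonneg ?_ ?_)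
  · -- Hermitian
    have hMherm : (P t * M + Mᵀ * P t).IsHermitian := herm_of_trans (by
      rw [Matrix.transpose_add, Matrix.transpose_mul, Matrix.transpose_mul,
        Matrix.transpose_transpose, hPsym, add_comm])
    have hsmul : ((q₀ / 2) • P t).IsHermitian := herm_of_trans (by
      rw [Matrix.transpose_smul, hPsym])
    exact hsmul.sub hMherm
  · intro x
    have hk := aux_key (P t) M p pbar q₀ hp hq₀ hQ hQu (hsmall t ht) x
    simp only [star_trivial, Matrix.sub_mulVec, Matrix.smul_mulVec,
      dotProduct_sub, dotProduct_smul, smul_eq_mul]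
    have : q₀ / 2 * (x ⬝ᵥ P t *ᵥ x) - x ⬝ᵥ (P t * M + Mᵀ * P t) *ᵥ x ≥ 0 := by linarith
    linarith
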